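/- Let F be a field of characteristic zero, V a finite-dimensional F-vector space, and Q a nondegenerate quadratic form on V. Suppose g and h are units of C(V) which both lie in GPin(V) (their twisted conjugations preserve ι(V)), are both unipotent (g − 1 and h − 1 are nilpotent elements of C(V)), and induce the same twisted conjugation on V: α(g)·ι(v)·g⁻¹ = α(h)·ι(v)·h⁻¹ for all v ∈ V. Then g = h. In other words, the restriction of the canonical projection P : GPin(V) → O(V) to the set of unipotent elements is injective. -/

import Mathlib

open CliffordAlgebra

section AuxLemmas

variable {F V : Type*} [Field F] [AddCommGroup V] [Module F V]

theorem contract_leibniz (Q : QuadraticForm F V) (d : Module.Dual F V)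
    (a b : CliffordAlgebra Q) :
    contractLeft (Q := Q) d (a * b) =
      contractLeft (Q := Q) d a * b + involute a * contractLeft (Q := Q) d b := by
  induction a using CliffordAlgebra.induction generalizing b with
  | algebraMap r =>
      simp [Algebra.algebraMap_eq_smul_one, smul_one_mul, map_smul, contractLeft_one]
  | ι m =>
      rw [contractLeft_ι_mul, contractLeft_ι, involute_ι, Algebra.smul_def, neg_mul, sub_eq_add_neg]
  | mul x y hx hy =>
      simp only [mul_assoc, hx, hy, map_mul]
      noncomm_ring
  | add x y hx hy =>
      rw [add_mul, map_add, hx, hy, map_add, map_add]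
      noncomm_ring

theorem twisted_comm (Q : QuadraticForm F V) (v : V) (x : CliffordAlgebra Q) :
    ι Q v * x = involute x * ι Q v + contractLeft (Q := Q) (Q.polarBilin v) x := by
  induction x using CliffordAlgebra.induction with
  | algebraMap r =>
      rw [contractLeft_algebraMap, add_zero, involute.commutes]
      exact (Algebra.commutes r _).symm
  | ι w =>
      rw [involute_ι, contractLeft_ι, neg_mul]
      refine eq_neg_add_of_add_eq ?_
      rw [QuadraticMap.polarBilin_apply_apply, ← QuadraticMap.polar_comm]
      exact CliffordAlgebra.ι_mul_ι_add_swap w v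
  | mul a b ha hb =>
      rw [← mul_assoc, ha, add_mul, mul_assoc, hb, contract_leibniz]
      simp only [map_mul]
      noncomm_ring
  | add a b ha hb =>
      rw [mul_add, ha, hb, map_add, map_add]
      noncomm_ring

open CliffordAlgebra

variable {F V : Type*} [Field F] [AddCommGroup V] [Module F V]

theorem number_op (b : Module.Basis (Fin (Module.finrank F V)) F V) (n : ℕ)
    (x : ExteriorAlgebra F V) (hx : x ∈ ⋀[F]^n V) :
    ∑ i, ExteriorAlgebra.ι F (b i) * contractLeft (Q := (0 : QuadraticForm F V)) (b.coord i) x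
      = (n : F) • x := by
  induction hx using Submodule.pow_induction_on_left' with
  | algebraMap r =>
      simp [contractLeft_algebraMap]
  | add x y i hx hy ihx ihy =>
      simp only [map_add, mul_add, Finset.sum_add_distrib, ihx, ihy, smul_add]
  | mem_mul m hm k x hx ih =>
      obtain ⟨v, rfl⟩ := hm
      have swap : ∀ a c : V, ExteriorAlgebra.ι F a * ExteriorAlgebra.ι F c
          = -(ExteriorAlgebra.ι F c * ExteriorAlgebra.ι F a) := by
        intro a c
        refine CliffordAlgebra.ι_mul_ι_comm_of_isOrtho ?_
        simp [QuadraticMap.IsOrtho]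
      have hv : (∑ j, b.coord j v • b j) = v := by
        simpa [Module.Basis.coord_apply] using b.sum_repr v
      have key : ∑ i, ExteriorAlgebra.ι F (b i) *
            contractLeft (Q := (0 : QuadraticForm F V)) (b.coord i)
              (ExteriorAlgebra.ι F v * x)
          = ExteriorAlgebra.ι F v * x
              + ExteriorAlgebra.ι F v * ((k : F) • x) := by
        calc ∑ i, ExteriorAlgebra.ι F (b i) *
              contractLeft (Q := (0 : QuadraticForm F V)) (b.coord i)
                (ExteriorAlgebra.ι F v * x)
            = ∑ j, (b.coord j v • (ExteriorAlgebra.ι F (b j) * x)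
                - ExteriorAlgebra.ι F (b j) * (ExteriorAlgebra.ι F v *
                  contractLeft (Q := (0 : QuadraticForm F V)) (b.coord j) x)) := by
              refine Finset.sum_congr rfl fun j _ => ?_
              rw [contractLeft_ι_mul, mul_sub, mul_smul_comm]
          _ = (∑ j, b.coord j v • ExteriorAlgebra.ι F (b j)) * x
                + ExteriorAlgebra.ι F v * ∑ j, ExteriorAlgebra.ι F (b j) *
                  contractLeft (Q := (0 : QuadraticForm F V)) (b.coord j) x := by
              rw [Finset.sum_sub_distrib, Finset.sum_mul, Finset.mul_sum, sub_eq_add_neg,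
                ← Finset.sum_neg_distrib]
              congr 1
              · exact Finset.sum_congr rfl fun j _ => (smul_mul_assoc _ _ _).symm
              · refine Finset.sum_congr rfl fun j _ => ?_
                rw [← mul_assoc, swap, neg_mul, neg_neg, mul_assoc]
          _ = ExteriorAlgebra.ι F v * x + ExteriorAlgebra.ι F v * ((k : F) • x) := by
              rw [ih]
              congr 1
              congr 1
              simp_rw [← map_smul]
              rw [← map_sum, hv]
      rw [key, mul_smul_comm]
      push_cast
      rw [add_smul, one_smul]
      abel

open CliffordAlgebra

variable {F V : Type*} [Field F] [CharZero F] [AddCommGroup V] [Module F V]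

theorem exterior_scalar [FiniteDimensional F V] (x : ExteriorAlgebra F V)
    (hx : ∀ d : Module.Dual F V, contractLeft (Q := (0 : QuadraticForm F V)) d x = 0) :
    ∃ r : F, x = algebraMap F (ExteriorAlgebra F V) r := by
  classical
  let b : Module.Basis (Fin (Module.finrank F V)) F V := Module.finBasis F V
  let 𝒜 : ℕ → Submodule F (ExteriorAlgebra F V) := fun i => ⋀[F]^i V
  let N : ExteriorAlgebra F V →ₗ[F] ExteriorAlgebra F V :=
    ∑ i, (LinearMap.mulLeft F (ExteriorAlgebra.ι F (b i))) ∘ₗ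
      (contractLeft (Q := (0 : QuadraticForm F V)) (b.coord i))
  have hNapp : ∀ y, N y = ∑ i, ExteriorAlgebra.ι F (b i) *
      contractLeft (Q := (0 : QuadraticForm F V)) (b.coord i) y := by
    intro y
    simp [N, LinearMap.sum_apply]
  have hN0 : N x = 0 := by
    rw [hNapp]
    simp [hx]
  -- decompose x
  have hmem : ∀ j : ℕ, j ≠ 0 → (DirectSum.decompose 𝒜 x j : ExteriorAlgebra F V) = 0 := by
    intro j hj
    have hxsum : x = ∑ n ∈ (DirectSum.decompose 𝒜 x).support,
        ((DirectSum.decompose 𝒜 x) n : ExteriorAlgebra F V) :=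
      (DirectSum.sum_support_decompose 𝒜 x).symm
    have hNsum : (0 : ExteriorAlgebra F V) = ∑ n ∈ (DirectSum.decompose 𝒜 x).support,
        (n : F) • ((DirectSum.decompose 𝒜 x) n : ExteriorAlgebra F V) := by
      rw [← hN0]
      conv_lhs => rw [hxsum]
      rw [map_sum]
      refine Finset.sum_congr rfl fun n _ => ?_
      rw [hNapp]
      exact number_op b n _ (SetLike.coe_mem _)
    have hproj := congrArg (fun y => (DirectSum.decompose 𝒜 y j : ExteriorAlgebra F V)) hNsum
    simp only [DirectSum.decompose_zero, DirectSum.zero_apply, ZeroMemClass.coe_zero,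
      DirectSum.decompose_sum] at hproj
    rw [DFinsupp.finset_sum_apply] at hproj
    rw [Submodule.coe_sum] at hproj
    by_cases hjs : j ∈ (DirectSum.decompose 𝒜 x).support
    · have : ∀ n ∈ (DirectSum.decompose 𝒜 x).support, n ≠ j →
          ((DirectSum.decompose 𝒜 ((n : F) • ((DirectSum.decompose 𝒜 x) n : ExteriorAlgebra F V)) j
            : 𝒜 j) : ExteriorAlgebra F V) = 0 := by
        intro n _ hnj
        rw [DirectSum.decompose_of_mem_ne 𝒜
          (Submodule.smul_mem _ _ (SetLike.coe_mem _)) hnj]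
      rw [Finset.sum_eq_single_of_mem j hjs (fun n hn hnj => this n hn hnj)] at hproj
      rw [DirectSum.decompose_of_mem_same 𝒜
        (Submodule.smul_mem _ _ (SetLike.coe_mem _))] at hproj
      have hj' : (j : F) ≠ 0 := Nat.cast_ne_zero.mpr hj
      have := hproj.symm
      rw [smul_eq_zero] at this
      exact this.resolve_left hj'
    · rw [DFinsupp.notMem_support_iff.mp hjs]
      rfl
  -- conclude x is in grade 0
  have hx0 : x ∈ 𝒜 0 := by
    rw [← DirectSum.sum_support_decompose 𝒜 x]
    refine Submodule.sum_mem _ fun n hn => ?_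
    rcases Nat.eq_zero_or_pos n with h0 | h0
    · subst h0; exact SetLike.coe_mem _
    · rw [hmem n (Nat.pos_iff_ne_zero.mp h0)]; exact Submodule.zero_mem _
  have : x ∈ (1 : Submodule F (ExteriorAlgebra F V)) := by
    simpa [𝒜, pow_zero] using hx0
  obtain ⟨r, hr⟩ := Submodule.mem_one.mp this
  exact ⟨r, hr.symm⟩

theorem contract_scalar (Q : QuadraticForm F V) [FiniteDimensional F V]
    (x : CliffordAlgebra Q) (hx : ∀ d : Module.Dual F V, contractLeft (Q := Q) d x = 0) :
    ∃ r : F, x = algebraMap F (CliffordAlgebra Q) r := by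
  haveI : Invertible (2 : F) := invertibleOfNonzero two_ne_zero
  obtain ⟨r, hr⟩ := exterior_scalar (equivExterior Q x) (fun d => by
    simp only [equivExterior, changeFormEquiv_apply]
    rw [← changeForm_contractLeft, hx, map_zero])
  refine ⟨r, (equivExterior Q).injective ?_⟩
  rw [hr]
  simp only [equivExterior, changeFormEquiv_apply, changeForm_algebraMap]

theorem algebraMap_clifford_injective (Q : QuadraticForm F V) :
    Function.Injective (algebraMap F (CliffordAlgebra Q)) := by
  haveI : Invertible (2 : F) := invertibleOfNonzero two_ne_zero
  intro a b hab
  have h2 := congrArg (equivExterior Q) hab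
  simp only [equivExterior, changeFormEquiv_apply, changeForm_algebraMap] at h2
  exact (ExteriorAlgebra.algebraMap_leftInverse V).injective h2

end AuxLemmas

/-- Let `F` be a field of characteristic zero, `V` a finite-dimensional `F`-vector space, and
`Q` a nondegenerate quadratic form on `V`. Suppose `g` and `h` are units of `C(V)` which
both lie in `GPin(V)`, are both unipotent (`g - 1` and `h - 1` are nilpotent), and induce
the same twisted conjugation on `V`. Then `g = h`.  That is, the restriction of the
canonical projection `P : GPin(V) → O(V)` to the set of unipotent elements is injective. -/
theorem projection_injective_on_unipotents
    {F V : Type*} [Field F] [CharZero F] [AddCommGroup V] [Module F V]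
    [FiniteDimensional F V] (Q : QuadraticForm F V) (hQ : Q.polarBilin.Nondegenerate)
    (g h : (CliffordAlgebra Q)ˣ)
    (hg : (fun x => involute (g : CliffordAlgebra Q) * x *
        ((g⁻¹ : (CliffordAlgebra Q)ˣ) : CliffordAlgebra Q)) '' Set.range (ι Q) =
        Set.range (ι Q))
    (hh : (fun x => involute (h : CliffordAlgebra Q) * x *
        ((h⁻¹ : (CliffordAlgebra Q)ˣ) : CliffordAlgebra Q)) '' Set.range (ι Q) =
        Set.range (ι Q))
    (hgu : IsNilpotent ((g : CliffordAlgebra Q) - 1))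
    (hhu : IsNilpotent ((h : CliffordAlgebra Q) - 1))
    (heq : ∀ v : V, involute (g : CliffordAlgebra Q) * ι Q v *
          ((g⁻¹ : (CliffordAlgebra Q)ˣ) : CliffordAlgebra Q) =
        involute (h : CliffordAlgebra Q) * ι Q v *
          ((h⁻¹ : (CliffordAlgebra Q)ˣ) : CliffordAlgebra Q)) :
    g = h := by
  set k : CliffordAlgebra Q := ↑h⁻¹ * ↑g with hk
  -- step 1: k twisted-commutes with every ι v
  have htw : ∀ v : V, involute k * ι Q v = ι Q v * k := by
    intro v
    calc involute k * ι Q v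
        = involute (↑h⁻¹ : CliffordAlgebra Q) *
            ((involute (↑g : CliffordAlgebra Q) * ι Q v * ↑g⁻¹) * ↑g) := by
          rw [hk, map_mul, mul_assoc]
          congr 1
          rw [mul_assoc, mul_assoc, Units.inv_mul, mul_one]
      _ = involute (↑h⁻¹ : CliffordAlgebra Q) *
            ((involute (↑h : CliffordAlgebra Q) * ι Q v * ↑h⁻¹) * ↑g) := by rw [heq v]
      _ = ((involute (↑h⁻¹ : CliffordAlgebra Q) * involute (↑h : CliffordAlgebra Q)) * ι Q v) *
            (↑h⁻¹ * ↑g) := by noncomm_ring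
      _ = ι Q v * k := by
          rw [← map_mul, Units.inv_mul, map_one, one_mul, hk]
  -- step 2: all contractions of k vanish
  have hcon : ∀ d : Module.Dual F V, contractLeft (Q := Q) d k = 0 := by
    have hv : ∀ v : V, contractLeft (Q := Q) (Q.polarBilin v) k = 0 := by
      intro v
      have h1 := twisted_comm Q v k
      rw [htw v] at h1
      exact (left_eq_add.mp h1)
    intro d
    set e := LinearMap.BilinForm.toDual Q.polarBilin hQ with he
    have hsurj : Q.polarBilin (e.symm d) = d := by
      ext w
      rw [show Q.polarBilin (e.symm d) w = e (e.symm d) w from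
        (LinearMap.BilinForm.toDual_def hQ).symm, e.apply_symm_apply]
    rw [← hsurj]
    exact hv _
  obtain ⟨c, hc⟩ := contract_scalar Q k hcon
  -- step 3: relate g and h by the scalar c
  have hginv : (↑g : CliffordAlgebra Q) = ↑h * algebraMap F _ c := by
    have h1 : (↑h : CliffordAlgebra Q) * k = ↑g := by
      rw [hk, ← mul_assoc, Units.mul_inv, one_mul]
    rw [← h1, hc]
  -- step 4: k - 1 is nilpotent
  have hwu : (↑h⁻¹ : CliffordAlgebra Q) * ↑g = algebraMap F _ c := by
    rw [hginv, ← mul_assoc, Units.inv_mul, one_mul]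
  have huw : (↑g : CliffordAlgebra Q) * ↑h⁻¹ = algebraMap F _ c := by
    rw [hginv, mul_assoc, Algebra.commutes c ((↑h⁻¹ : CliffordAlgebra Q)), ← mul_assoc,
      Units.mul_inv, one_mul]
  have hcwu : Commute (↑h⁻¹ : CliffordAlgebra Q) (↑g : CliffordAlgebra Q) := by
    unfold Commute SemiconjBy; rw [hwu, huw]
  have hw1 : IsNilpotent ((↑h⁻¹ : CliffordAlgebra Q) - 1) := by
    have hcomm : Commute (↑h⁻¹ : CliffordAlgebra Q) ((↑h : CliffordAlgebra Q) - 1) := by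
      unfold Commute SemiconjBy
      rw [mul_sub, sub_mul, mul_one, one_mul, Units.inv_mul, Units.mul_inv]
    have h1 : IsNilpotent ((↑h⁻¹ : CliffordAlgebra Q) * ((↑h : CliffordAlgebra Q) - 1)) :=
      hcomm.isNilpotent_mul_left hhu
    have h2 : (↑h⁻¹ : CliffordAlgebra Q) - 1
        = -((↑h⁻¹ : CliffordAlgebra Q) * ((↑h : CliffordAlgebra Q) - 1)) := by
      rw [mul_sub, mul_one, Units.inv_mul, neg_sub]
    rw [h2]
    exact h1.neg
  have hcw : Commute (↑h⁻¹ : CliffordAlgebra Q) ((↑g : CliffordAlgebra Q) - 1) :=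
    hcwu.sub_right (Commute.one_right _)
  have hw2 : IsNilpotent ((↑h⁻¹ : CliffordAlgebra Q) * ((↑g : CliffordAlgebra Q) - 1)) :=
    hcw.isNilpotent_mul_left hgu
  have hknil : IsNilpotent (k - 1) := by
    have h3 : k - 1 = (↑h⁻¹ : CliffordAlgebra Q) * ((↑g : CliffordAlgebra Q) - 1)
        + ((↑h⁻¹ : CliffordAlgebra Q) - 1) := by rw [hk]; noncomm_ring
    rw [h3]
    have hcomm2 : Commute ((↑h⁻¹ : CliffordAlgebra Q) * ((↑g : CliffordAlgebra Q) - 1))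
        ((↑h⁻¹ : CliffordAlgebra Q) - 1) :=
      (Commute.mul_left (Commute.refl _) hcw.symm).sub_right (Commute.one_right _)
    exact hcomm2.isNilpotent_add hw2 hw1
  -- step 5: conclude c = 1
  obtain ⟨m, hm⟩ := hknil
  rw [hc, ← map_one (algebraMap F (CliffordAlgebra Q)), ← map_sub, ← map_pow] at hm
  have hc1 : (c - 1) ^ m = 0 := by
    apply algebraMap_clifford_injective Q
    rw [hm, map_zero]
  have hc2 : c = 1 := by
    rcases Nat.eq_zero_or_pos m with h0 | h0
    · exfalso; rw [h0, pow_zero] at hc1; exact one_ne_zero hc1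
    · exact sub_eq_zero.mp ((pow_eq_zero_iff (Nat.pos_iff_ne_zero.mp h0)).mp hc1)
  have hk1 : k = 1 := by rw [hc, hc2, map_one]
  have hfin : h⁻¹ * g = 1 := Units.ext (by rw [Units.val_mul, ← hk, hk1, Units.val_one])
  exact (inv_mul_eq_one.mp hfin).symm
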